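/- Let S₁₁, …, S₁ₙ be bounded operators on a complex Hilbert space H. The numerical radius of the n×n block operator matrix whose first row is (S₁₁, S₁₂, …, S₁ₙ), whose first column is (S₁₁, S₁₂, …, S₁ₙ)ᵀ, and all other entries zero, is at most (1/2)[w(S₁₁) + √(w(S₁₁)² + 4∑_{k=2}^{n} w(S₁ₖ)²)]. -/

import Mathlib

noncomputable def numRadius {E : Type*} [NormedAddCommGroup E] [InnerProductSpace ℂ E]
    (T : E →L[ℂ] E) : ℝ :=
  sSup {r : ℝ | ∃ x : E, ‖x‖ = 1 ∧ r = ‖(inner ℂ (T x) x : ℂ)‖}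

noncomputable def blockOp {H : Type*} [NormedAddCommGroup H] [InnerProductSpace ℂ H]
    (n : ℕ) (M : Fin n → Fin n → H →L[ℂ] H) :
    (PiLp 2 fun _ : Fin n => H) →L[ℂ] (PiLp 2 fun _ : Fin n => H) :=
  (PiLp.continuousLinearEquiv 2 ℂ (fun _ : Fin n => H)).symm.toContinuousLinearMap ∘L
    (ContinuousLinearMap.pi fun i => ∑ j, (M i j).comp (ContinuousLinearMap.proj j)) ∘L
    (PiLp.continuousLinearEquiv 2 ℂ (fun _ : Fin n => H)).toContinuousLinearMap

section Aux

variable {E : Type*} [NormedAddCommGroup E] [InnerProductSpace ℂ E]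

lemma numRadius_nonneg (T : E →L[ℂ] E) : 0 ≤ numRadius T :=
  Real.sSup_nonneg (by rintro r ⟨x, hx, rfl⟩; positivity)

lemma numRadius_bdd (T : E →L[ℂ] E) :
    BddAbove {r : ℝ | ∃ x : E, ‖x‖ = 1 ∧ r = ‖(inner ℂ (T x) x : ℂ)‖} := by
  refine ⟨‖T‖, ?_⟩
  rintro r ⟨x, hx, rfl⟩
  calc ‖(inner ℂ (T x) x : ℂ)‖ ≤ ‖T x‖ * ‖x‖ := norm_inner_le_norm _ _
    _ ≤ ‖T‖ * ‖x‖ * ‖x‖ := by gcongr; exact T.le_opNorm x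
    _ = ‖T‖ := by rw [hx]; ring

lemma inner_le_numRadius (T : E →L[ℂ] E) (u : E) :
    ‖(inner ℂ (T u) u : ℂ)‖ ≤ numRadius T * ‖u‖ ^ 2 := by
  rcases eq_or_ne u 0 with rfl | hu
  · simp
  · set c : ℝ := ‖u‖ with hc
    have hcpos : 0 < c := norm_pos_iff.mpr hu
    set v : E := (c⁻¹ : ℂ) • u with hv
    have hvn : ‖v‖ = 1 := by
      simp [hv, norm_smul, abs_of_pos hcpos]
      field_simp; exact hc.symm
    have h1 : ‖(inner ℂ (T v) v : ℂ)‖ ≤ numRadius T :=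
      le_csSup (numRadius_bdd T) ⟨v, hvn, rfl⟩
    have h2 : (inner ℂ (T v) v : ℂ) = ((c : ℂ)⁻¹)^2 * inner ℂ (T u) u := by
      simp [hv, inner_smul_left, inner_smul_right, map_smul]
      ring_nf
    have h3 : ‖(inner ℂ (T v) v : ℂ)‖ = (c^2)⁻¹ * ‖(inner ℂ (T u) u : ℂ)‖ := by
      rw [h2, norm_mul]
      congr 1
      rw [norm_pow, norm_inv, Complex.norm_real, Real.norm_eq_abs, abs_of_pos hcpos, inv_pow]
    rw [h3] at h1
    have := mul_le_mul_of_nonneg_left h1 (le_of_lt (by positivity : (0:ℝ) < c^2))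
    calc ‖(inner ℂ (T u) u : ℂ)‖ = c^2 * ((c^2)⁻¹ * ‖(inner ℂ (T u) u : ℂ)‖) := by
          field_simp
      _ ≤ c^2 * numRadius T := this
      _ = numRadius T * ‖u‖^2 := by rw [hc]; ring

lemma cross_le_numRadius (T : E →L[ℂ] E) (a b : E) :
    ‖(inner ℂ (T a) b : ℂ) + inner ℂ (T b) a‖ ≤ 2 * numRadius T * ‖a‖ * ‖b‖ := by
  have key : ∀ u v : E, ‖(inner ℂ (T u) v : ℂ) + inner ℂ (T v) u‖ ≤
      numRadius T * (‖u‖^2 + ‖v‖^2) := by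
    intro u v
    have hid : (inner ℂ (T u) v : ℂ) + inner ℂ (T v) u =
        (1/2 : ℂ) * (inner ℂ (T (u+v)) (u+v) - inner ℂ (T (u-v)) (u-v)) := by
      simp only [map_add, map_sub, inner_add_left, inner_add_right, inner_sub_left,
        inner_sub_right]
      ring
    rw [hid]
    have hp := parallelogram_law_with_norm ℂ u v
    calc ‖(1/2 : ℂ) * ((inner ℂ (T (u+v)) (u+v) : ℂ) - inner ℂ (T (u-v)) (u-v))‖
        = (1/2) * ‖(inner ℂ (T (u+v)) (u+v) : ℂ) - inner ℂ (T (u-v)) (u-v)‖ := by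
          rw [norm_mul]; norm_num
      _ ≤ (1/2) * (‖(inner ℂ (T (u+v)) (u+v) : ℂ)‖ + ‖(inner ℂ (T (u-v)) (u-v) : ℂ)‖) := by
          gcongr; exact norm_sub_le _ _
      _ ≤ (1/2) * (numRadius T * ‖u+v‖^2 + numRadius T * ‖u-v‖^2) := by
          gcongr <;> exact inner_le_numRadius T _
      _ = numRadius T * (‖u‖^2 + ‖v‖^2) := by linear_combination (numRadius T / 2) * hp
  rcases eq_or_ne a 0 with rfl | ha
  · simp
  rcases eq_or_ne b 0 with rfl | hb
  · simp
  have hapos : 0 < ‖a‖ := norm_pos_iff.mpr ha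
  have hbpos : 0 < ‖b‖ := norm_pos_iff.mpr hb
  set t : ℝ := Real.sqrt (‖b‖ / ‖a‖) with ht
  have htpos : 0 < t := Real.sqrt_pos.mpr (by positivity)
  have ht2 : t^2 = ‖b‖ / ‖a‖ := Real.sq_sqrt (by positivity)
  have hscale : (inner ℂ (T ((t:ℂ) • a)) ((t⁻¹:ℂ) • b) : ℂ) + inner ℂ (T ((t⁻¹:ℂ) • b)) ((t:ℂ) • a)
      = (inner ℂ (T a) b : ℂ) + inner ℂ (T b) a := by
    have : ((t:ℂ))⁻¹ = ((t⁻¹ : ℝ) : ℂ) := by push_cast; ring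
    simp only [map_smul, inner_smul_left, inner_smul_right, Complex.conj_ofReal, this]
    have htC : (t:ℂ) ≠ 0 := by exact_mod_cast Complex.ofReal_ne_zero.mpr htpos.ne'
    push_cast
    field_simp
  have h := key ((t:ℂ) • a) ((t⁻¹:ℂ) • b)
  rw [hscale] at h
  have hna : ‖(t:ℂ) • a‖ = t * ‖a‖ := by
    simp [norm_smul, abs_of_pos htpos]
  have hnb : ‖(t⁻¹:ℂ) • b‖ = t⁻¹ * ‖b‖ := by
    simp [norm_smul, abs_of_pos htpos, abs_of_pos (inv_pos.mpr htpos)]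
  rw [hna, hnb] at h
  have heq : numRadius T * ((t*‖a‖)^2 + (t⁻¹*‖b‖)^2) = 2 * numRadius T * ‖a‖ * ‖b‖ := by
    have h1 : (t*‖a‖)^2 = ‖b‖ * ‖a‖ := by
      rw [mul_pow, ht2]; field_simp
    have h2 : (t⁻¹*‖b‖)^2 = ‖a‖ * ‖b‖ := by
      rw [mul_pow, inv_pow, ht2]; field_simp
    rw [h1, h2]; ring
  rw [heq] at h; exact h

lemma numRadius_le (T : E →L[ℂ] E) (c : ℝ) (hc : 0 ≤ c)
    (h : ∀ x : E, ‖x‖ = 1 → ‖(inner ℂ (T x) x : ℂ)‖ ≤ c) : numRadius T ≤ c :=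
  Real.sSup_le (by rintro r ⟨x, hx, rfl⟩; exact h x hx) hc

lemma scalar_ineq (w0 W a b : ℝ) (hw0 : 0 ≤ w0) (hW : 0 ≤ W) (ha : 0 ≤ a) (hb : 0 ≤ b)
    (h : a^2 + b^2 = 1) :
    w0*a^2 + 2*W*a*b ≤ (1/2)*(w0 + Real.sqrt (w0^2 + 4*W^2)) := by
  set s := Real.sqrt (w0^2+4*W^2) with hs
  have hs2 : s^2 = w0^2+4*W^2 := Real.sq_sqrt (by positivity)
  have hs0 : 0 ≤ s := Real.sqrt_nonneg _
  have hsw : w0 ≤ s := by nlinarith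
  have key : (s - w0) * ((s-w0)*a^2 - 4*W*a*b + (s+w0)*b^2) =
      ((s-w0)*a - 2*W*b)^2 := by nlinarith [hs2]
  rcases eq_or_lt_of_le hsw with heq | hlt
  · have hW0 : W = 0 := by nlinarith
    rw [hW0, ← heq]; nlinarith
  · have h2 : (s-w0)*a^2 - 4*W*a*b + (s+w0)*b^2 ≥ 0 := by
      nlinarith [key, sq_nonneg ((s-w0)*a - 2*W*b)]
    nlinarith

end Aux

variable {H : Type*} [NormedAddCommGroup H] [InnerProductSpace ℂ H]
theorem stmt16 (n : ℕ) [NeZero n] (S : Fin n → H →L[ℂ] H) :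
    numRadius (blockOp n (fun i j =>
        if i = 0 then S j else if j = 0 then S i else 0)) ≤
      (1 / 2) * (numRadius (S 0) +
        Real.sqrt (numRadius (S 0) ^ 2 +
          4 * ∑ k ∈ Finset.univ.erase (0 : Fin n), numRadius (S k) ^ 2)) := by
  have hw0 : 0 ≤ numRadius (S 0) := numRadius_nonneg _
  have hsum_nonneg : (0:ℝ) ≤ ∑ k ∈ Finset.univ.erase (0 : Fin n), numRadius (S k) ^ 2 :=
    Finset.sum_nonneg fun k _ => sq_nonneg _
  refine numRadius_le _ _ ?_ ?_
  · have h1 := Real.sqrt_nonneg (numRadius (S 0) ^ 2 +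
      4 * ∑ k ∈ Finset.univ.erase (0 : Fin n), numRadius (S k) ^ 2)
    linarith
  · intro x hx
    set M : Fin n → Fin n → H →L[ℂ] H :=
      fun i j => if i = 0 then S j else if j = 0 then S i else 0 with hM
    have happ : ∀ i, blockOp n M x i = ∑ j, M i j (x j) := by
      intro i; simp [blockOp, ContinuousLinearMap.sum_apply]
    have h0 : blockOp n M x 0 = ∑ j, S j (x j) := by
      rw [happ]; apply Finset.sum_congr rfl; intro j _; simp [hM]
    have hi : ∀ i : Fin n, i ≠ 0 → blockOp n M x i = S i (x 0) := by
      intro i hi0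
      rw [happ]
      rw [Finset.sum_eq_single 0]
      · simp [hM, hi0]
      · intro j _ hj0; simp [hM, hi0, hj0]
      · simp
    have hinner : (inner ℂ (blockOp n M x) x : ℂ) =
        inner ℂ (S 0 (x 0)) (x 0) +
        ∑ k ∈ Finset.univ.erase (0 : Fin n),
          ((inner ℂ (S k (x k)) (x 0) : ℂ) + inner ℂ (S k (x 0)) (x k)) := by
      rw [PiLp.inner_apply]
      rw [← Finset.add_sum_erase _ _ (Finset.mem_univ (0 : Fin n))]
      rw [h0, sum_inner, ← Finset.add_sum_erase _ _ (Finset.mem_univ (0 : Fin n))]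
      rw [Finset.sum_add_distrib, add_assoc]
      congr 1
      congr 1
      apply Finset.sum_congr rfl
      intro i hi'
      rw [hi i (Finset.ne_of_mem_erase hi')]
    set a : ℝ := ‖x 0‖ with ha
    have ha0 : 0 ≤ a := norm_nonneg _
    have hxsum : a^2 + ∑ k ∈ Finset.univ.erase (0 : Fin n), ‖x k‖^2 = 1 := by
      have h1 := PiLp.norm_sq_eq_of_L2 (fun _ : Fin n => H) x
      rw [hx] at h1
      rw [← Finset.add_sum_erase _ _ (Finset.mem_univ (0 : Fin n))] at h1
      rw [ha]; linarith [h1]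
    set b : ℝ := Real.sqrt (∑ k ∈ Finset.univ.erase (0 : Fin n), ‖x k‖^2) with hb
    have hb0 : 0 ≤ b := Real.sqrt_nonneg _
    have hb2 : b^2 = ∑ k ∈ Finset.univ.erase (0 : Fin n), ‖x k‖^2 :=
      Real.sq_sqrt (Finset.sum_nonneg fun k _ => sq_nonneg _)
    set W : ℝ := Real.sqrt (∑ k ∈ Finset.univ.erase (0 : Fin n), numRadius (S k)^2) with hW
    have hW0 : 0 ≤ W := Real.sqrt_nonneg _
    have hW2 : W^2 = ∑ k ∈ Finset.univ.erase (0 : Fin n), numRadius (S k)^2 :=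
      Real.sq_sqrt hsum_nonneg
    have hCS : ∑ k ∈ Finset.univ.erase (0 : Fin n), numRadius (S k) * ‖x k‖ ≤ W * b := by
      have h1 := Finset.sum_mul_sq_le_sq_mul_sq (Finset.univ.erase (0 : Fin n))
        (fun k => numRadius (S k)) (fun k => ‖x k‖)
      have h2 : (∑ k ∈ Finset.univ.erase (0 : Fin n), numRadius (S k) * ‖x k‖)^2 ≤ (W*b)^2 := by
        rw [mul_pow, hW2, hb2]; exact h1
      have h3 : 0 ≤ ∑ k ∈ Finset.univ.erase (0 : Fin n), numRadius (S k) * ‖x k‖ :=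
        Finset.sum_nonneg fun k _ => mul_nonneg (numRadius_nonneg _) (norm_nonneg _)
      nlinarith [h2, h3, mul_nonneg hW0 hb0]
    have hmain : ‖(inner ℂ (blockOp n M x) x : ℂ)‖ ≤ numRadius (S 0) * a^2 + 2 * W * a * b := by
      rw [hinner]
      calc ‖(inner ℂ (S 0 (x 0)) (x 0) : ℂ) +
          ∑ k ∈ Finset.univ.erase (0 : Fin n),
            ((inner ℂ (S k (x k)) (x 0) : ℂ) + inner ℂ (S k (x 0)) (x k))‖
          ≤ ‖(inner ℂ (S 0 (x 0)) (x 0) : ℂ)‖ +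
            ∑ k ∈ Finset.univ.erase (0 : Fin n),
              ‖(inner ℂ (S k (x k)) (x 0) : ℂ) + inner ℂ (S k (x 0)) (x k)‖ :=
            le_trans (norm_add_le _ _) (by gcongr; exact norm_sum_le _ _)
        _ ≤ numRadius (S 0) * ‖x 0‖^2 +
            ∑ k ∈ Finset.univ.erase (0 : Fin n),
              2 * numRadius (S k) * ‖x k‖ * ‖x 0‖ := by
            gcongr with k hk
            · exact inner_le_numRadius _ _
            · exact cross_le_numRadius (S k) (x k) (x 0)
        _ = numRadius (S 0) * a^2 +
            2 * a * ∑ k ∈ Finset.univ.erase (0 : Fin n), numRadius (S k) * ‖x k‖ := by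
            rw [Finset.mul_sum, ← ha]; congr 1; apply Finset.sum_congr rfl
            intro k _; ring
        _ ≤ numRadius (S 0) * a^2 + 2 * a * (W * b) := by gcongr
        _ = numRadius (S 0) * a^2 + 2 * W * a * b := by ring
    have hfinal := scalar_ineq (numRadius (S 0)) W a b hw0 hW0 ha0 hb0 (by rw [hb2]; exact hxsum)
    rw [hW2] at hfinal
    linarith [hmain, hfinal]
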